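/- For a positive integer s and nonnegative integer r, the sum over all Dyck paths D from (0,0) to (2s,0) with at least r marked returns of q^{vmr(D)} equals q^{binomial(r+1,2)} * qbinom(2s-1, s+r). -/

import Mathlib

open Finset
open scoped Classical

/-- `(q;q)_n` as a formal power series over `ℚ`. -/
noncomputable def qp (n : ℕ) : PowerSeries ℚ :=
  ∏ i ∈ Finset.range n, (1 - (PowerSeries.X : PowerSeries ℚ) ^ (i + 1))

/-- The Gaussian binomial coefficient `qbinom(n,k)`. -/
noncomputable def qbin (n k : ℕ) : PowerSeries ℚ :=
  if k ≤ n then qp n * (qp k * qp (n - k))⁻¹ else 0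

/-- Height of the lattice path (steps `true` = up `(1,1)`, `false` = down `(1,-1)`)
after the first `k` steps. -/
def ht {L : ℕ} (p : Fin L → Bool) (k : ℕ) : ℤ :=
  ∑ i ∈ Finset.univ.filter (fun i : Fin L => (i : ℕ) < k), (if p i then (1 : ℤ) else -1)

/-- `p` is a ballot path from `(0,0)` to `(s+t, s-t)`: `s` up-steps, `t` down-steps,
never passing below the `x`-axis. -/
def IsBallot {L : ℕ} (p : Fin L → Bool) (s t : ℕ) : Prop :=
  (Finset.univ.filter fun i => p i = true).card = s ∧
  (Finset.univ.filter fun i => p i = false).card = t ∧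
  ∀ k : ℕ, 0 ≤ ht p k

/-- The point with `x`-coordinate `i` is a valley: the step before it is a down-step
and the step after it is an up-step. -/
def IsValley {L : ℕ} (p : Fin L → Bool) (i : Fin L) : Prop :=
  ∃ _ : 1 ≤ (i : ℕ),
    p ⟨(i : ℕ) - 1, lt_of_le_of_lt (Nat.sub_le _ _) i.isLt⟩ = false ∧ p i = true

/-- A return is a valley on the `x`-axis. -/
def IsReturn {L : ℕ} (p : Fin L → Bool) (i : Fin L) : Prop :=
  IsValley p i ∧ ht p (i : ℕ) = 0

/-- `maj`: sum of the `x`-coordinates of the valleys. -/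
noncomputable def pmaj {L : ℕ} (p : Fin L → Bool) : ℕ :=
  ∑ i ∈ Finset.univ.filter (fun i => IsValley p i), (i : ℕ)

/-- `vmr(D) = maj(D) - (1/2) Σ (x-coordinates of marked returns)`;
the marked returns have even `x`-coordinates, so this is an integer. -/
noncomputable def vmr {L : ℕ} (p : Fin L → Bool) (M : Finset (Fin L)) : ℕ :=
  pmaj p - (∑ i ∈ M, (i : ℕ)) / 2

lemma qp_const (n : ℕ) : PowerSeries.constantCoeff (qp n) = 1 := by
  simp [qp, map_prod]

lemma qp_ne_zero (n : ℕ) : qp n ≠ 0 := by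
  intro h; have := qp_const n; rw [h] at this; simp at this

lemma qbin_mul (n k : ℕ) (h : k ≤ n) : qbin n k * (qp k * qp (n - k)) = qp n := by
  rw [qbin, if_pos h, mul_assoc, PowerSeries.inv_mul_cancel, mul_one]
  simp [qp_const]

lemma qp_succ (n : ℕ) : qp (n+1) = qp n * (1 - PowerSeries.X ^ (n+1)) := by
  rw [qp, Finset.prod_range_succ, ← qp]

lemma qbin_zero (n : ℕ) : qbin n 0 = 1 := by
  rw [qbin, if_pos (Nat.zero_le n)]
  have : qp 0 = 1 := by simp [qp]
  rw [this, one_mul, Nat.sub_zero, PowerSeries.mul_inv_cancel]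
  simp [qp_const]

lemma qbin_symm (n k : ℕ) (h : k ≤ n) : qbin n k = qbin n (n - k) := by
  rw [qbin, qbin, if_pos h, if_pos (Nat.sub_le n k), Nat.sub_sub_self h, mul_comm (qp (n-k))]

lemma qbin_helper (n k m : ℕ) (h : n - k = m) (hk : k ≤ n) :
    qbin n k * (qp k * qp m) = qp n := by
  subst h; exact qbin_mul n k hk

lemma I1 (j m : ℕ) :
    qbin (j+m+2) (j+1) = qbin (j+m+1) j + qbin (j+m+1) (j+1)
      + ((PowerSeries.X : PowerSeries ℚ)^(j+m+1) - 1) * qbin (j+m) j := by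
  have hD : qp (j+1) * qp (m+1) ≠ 0 := mul_ne_zero (qp_ne_zero _) (qp_ne_zero _)
  apply mul_right_cancel₀ hD
  have h1 := qbin_helper (j+m+2) (j+1) (m+1) (by omega) (by omega)
  have h2 := qbin_helper (j+m+1) j (m+1) (by omega) (by omega)
  have h3 := qbin_helper (j+m+1) (j+1) m (by omega) (by omega)
  have h4 := qbin_helper (j+m) j m (by omega) (by omega)
  have s1 : qp (j+1) = qp j * (1 - PowerSeries.X ^ (j+1)) := qp_succ j
  have s2 : qp (m+1) = qp m * (1 - PowerSeries.X ^ (m+1)) := qp_succ m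
  have s3 : qp (j+m+2) = qp (j+m) * (1 - PowerSeries.X ^ (j+m+1)) * (1 - PowerSeries.X ^ (j+m+2)) := by
    rw [show j+m+2 = (j+m+1)+1 from rfl, qp_succ, qp_succ]
  have s4 : qp (j+m+1) = qp (j+m) * (1 - PowerSeries.X ^ (j+m+1)) := qp_succ _
  simp only [s1, s2, s3, s4] at h1 h2 h3 h4 ⊢
  linear_combination h1 - (1 - PowerSeries.X ^ (j+1)) * h2 - (1 - PowerSeries.X ^ (m+1)) * h3
    - ((PowerSeries.X : PowerSeries ℚ)^(j+m+1) - 1) * (1 - PowerSeries.X ^ (j+1)) * (1 - PowerSeries.X ^ (m+1)) * h4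

lemma I2 (j m : ℕ) :
    qbin (j+m+3) (j+1) = qbin (j+m+2) j
      + (PowerSeries.X : PowerSeries ℚ)^(j+m+2) * qbin (j+m+1) j
      + (PowerSeries.X : PowerSeries ℚ)^(j+1) * qbin (j+m+1) (j+1) := by
  have hD : qp (j+1) * qp (m+2) ≠ 0 := mul_ne_zero (qp_ne_zero _) (qp_ne_zero _)
  apply mul_right_cancel₀ hD
  have h1 := qbin_helper (j+m+3) (j+1) (m+2) (by omega) (by omega)
  have h2 := qbin_helper (j+m+2) j (m+2) (by omega) (by omega)
  have h3 := qbin_helper (j+m+1) j (m+1) (by omega) (by omega)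
  have h4 := qbin_helper (j+m+1) (j+1) m (by omega) (by omega)
  have s1 : qp (j+1) = qp j * (1 - PowerSeries.X ^ (j+1)) := qp_succ j
  have s2 : qp (m+1) = qp m * (1 - PowerSeries.X ^ (m+1)) := qp_succ m
  have s2' : qp (m+2) = qp m * (1 - PowerSeries.X ^ (m+1)) * (1 - PowerSeries.X ^ (m+2)) := by
    rw [show m+2 = (m+1)+1 from rfl, qp_succ, qp_succ]
  have s3 : qp (j+m+3) = qp (j+m+1) * (1 - PowerSeries.X ^ (j+m+2)) * (1 - PowerSeries.X ^ (j+m+3)) := by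
    rw [show j+m+3 = (j+m+2)+1 from rfl, qp_succ, qp_succ]
  have s4 : qp (j+m+2) = qp (j+m+1) * (1 - PowerSeries.X ^ (j+m+2)) := qp_succ _
  simp only [s1, s2, s2', s3, s4] at h1 h2 h3 h4 ⊢
  linear_combination h1 - (1 - PowerSeries.X ^ (j+1)) * h2
    - (PowerSeries.X : PowerSeries ℚ)^(j+m+2) * (1 - PowerSeries.X ^ (j+1)) * (1 - PowerSeries.X ^ (m+2)) * h3
    - (PowerSeries.X : PowerSeries ℚ)^(j+1) * (1 - PowerSeries.X ^ (m+1)) * (1 - PowerSeries.X ^ (m+2)) * h4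

lemma I3 (b : ℕ) :
    qbin (2*b+3) (b+1) = qbin (2*b+2) b
      + ((PowerSeries.X : PowerSeries ℚ)^(2*b+2) + (PowerSeries.X : PowerSeries ℚ)^(b+1)) * qbin (2*b+1) b := by
  have hD : qp (b+1) * qp (b+2) ≠ 0 := mul_ne_zero (qp_ne_zero _) (qp_ne_zero _)
  apply mul_right_cancel₀ hD
  have h1 := qbin_helper (2*b+3) (b+1) (b+2) (by omega) (by omega)
  have h2 := qbin_helper (2*b+2) b (b+2) (by omega) (by omega)
  have h3 := qbin_helper (2*b+1) b (b+1) (by omega) (by omega)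
  have s1 : qp (b+1) = qp b * (1 - PowerSeries.X ^ (b+1)) := qp_succ b
  have s1' : qp (b+2) = qp b * (1 - PowerSeries.X ^ (b+1)) * (1 - PowerSeries.X ^ (b+2)) := by
    rw [show b+2 = (b+1)+1 from rfl, qp_succ, qp_succ]
  have s3 : qp (2*b+3) = qp (2*b+1) * (1 - PowerSeries.X ^ (2*b+2)) * (1 - PowerSeries.X ^ (2*b+3)) := by
    rw [show 2*b+3 = (2*b+2)+1 from rfl, qp_succ, qp_succ]
  have s4 : qp (2*b+2) = qp (2*b+1) * (1 - PowerSeries.X ^ (2*b+2)) := qp_succ _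
  simp only [s1, s1', s3, s4] at h1 h2 h3 ⊢
  linear_combination h1 - (1 - PowerSeries.X ^ (b+1)) * h2
    - ((PowerSeries.X : PowerSeries ℚ)^(2*b+2) + (PowerSeries.X : PowerSeries ℚ)^(b+1))
      * (1 - PowerSeries.X ^ (b+1)) * (1 - PowerSeries.X ^ (b+2)) * h3

/-! ### basic ht lemmas -/

lemma ht_zero {L : ℕ} (p : Fin L → Bool) : ht p 0 = 0 := by
  simp [ht]

lemma ht_succ {L : ℕ} (p : Fin L → Bool) (k : ℕ) (hk : k < L) :
    ht p (k+1) = ht p k + (if p ⟨k, hk⟩ then (1:ℤ) else -1) := by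
  have : (Finset.univ.filter (fun i : Fin L => (i : ℕ) < k + 1))
      = insert ⟨k, hk⟩ (Finset.univ.filter (fun i : Fin L => (i : ℕ) < k)) := by
    ext i
    simp only [mem_filter, mem_univ, true_and, mem_insert]
    constructor
    · intro h
      rcases Nat.lt_succ_iff_lt_or_eq.mp h with h' | h'
      · exact Or.inr h'
      · exact Or.inl (Fin.ext h')
    · rintro (rfl | h)
      · exact Nat.lt_succ_self k
      · exact Nat.lt_succ_of_lt h
  rw [ht, this, Finset.sum_insert (by simp), ht, add_comm]

lemma ht_ge {L : ℕ} (p : Fin L → Bool) (k : ℕ) (hk : L ≤ k) : ht p k = ht p L := by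
  unfold ht
  congr 1
  apply Finset.filter_congr
  intro i _
  simp [lt_of_lt_of_le i.isLt hk, i.isLt]

lemma ht_even {L : ℕ} (p : Fin L → Bool) (k : ℕ) (hk : k ≤ L) : Even (ht p k + k) := by
  induction k with
  | zero => simp [ht_zero]
  | succ m ih =>
    have hm : m < L := hk
    have := ih (le_of_lt hm)
    rw [ht_succ p m hm]
    rcases this with ⟨c, hc⟩
    by_cases hp : p ⟨m, hm⟩ = true
    · simp only [hp, if_true]
      exact ⟨c+1, by push_cast; push_cast at hc; linarith⟩
    · simp only [hp, if_false]
      exact ⟨c, by push_cast; push_cast at hc; linarith⟩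

/-! ### snoc lemmas -/

lemma snoc_lt {n : ℕ} (p : Fin n → Bool) (c : Bool) (j : ℕ) (h1 : j < n) (h2 : j < n+1) :
    (Fin.snoc p c : Fin (n+1) → Bool) ⟨j, h2⟩ = p ⟨j, h1⟩ := by
  have : (⟨j, h2⟩ : Fin (n+1)) = Fin.castSucc ⟨j, h1⟩ := rfl
  rw [this, Fin.snoc_castSucc]

lemma snoc_last' {n : ℕ} (p : Fin n → Bool) (c : Bool) (h2 : n < n+1) :
    (Fin.snoc p c : Fin (n+1) → Bool) ⟨n, h2⟩ = c := by
  have : (⟨n, h2⟩ : Fin (n+1)) = Fin.last n := rfl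
  rw [this, Fin.snoc_last]

lemma ht_snoc {n : ℕ} (p : Fin n → Bool) (c : Bool) (k : ℕ) (hk : k ≤ n) :
    ht (Fin.snoc p c) k = ht p k := by
  induction k with
  | zero => rw [ht_zero, ht_zero]
  | succ m ih =>
    have hm : m < n := hk
    rw [ht_succ _ m (by omega), ht_succ p m hm, ih (le_of_lt hm), snoc_lt p c m hm]

lemma ht_snoc_top {n : ℕ} (p : Fin n → Bool) (c : Bool) :
    ht (Fin.snoc p c) (n+1) = ht p n + (if c then (1:ℤ) else -1) := by
  rw [ht_succ _ n (by omega), ht_snoc p c n le_rfl, snoc_last']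

/-! ### valley snoc lemmas -/

def lastD {n : ℕ} (p : Fin n → Bool) : Prop := ∃ i : Fin n, (i : ℕ) + 1 = n ∧ p i = false

lemma lastD_iff {n : ℕ} (p : Fin n → Bool) :
    lastD p ↔ ∃ h : 1 ≤ n, p ⟨n - 1, by omega⟩ = false := by
  constructor
  · rintro ⟨i, hi, hp⟩
    refine ⟨by omega, ?_⟩
    have : (⟨n-1, by omega⟩ : Fin n) = i := Fin.ext (by simp; omega)
    rw [this, hp]
  · rintro ⟨h, hp⟩
    exact ⟨⟨n-1, by omega⟩, by simp; omega, hp⟩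

lemma snoc_castSucc' {n : ℕ} (p : Fin n → Bool) (c : Bool) (i : Fin n) :
    (Fin.snoc p c : Fin (n+1) → Bool) (Fin.castSucc i) = p i := by
  have h2 : (i:ℕ) < n+1 := by omega
  have e : Fin.castSucc i = (⟨(i:ℕ), h2⟩ : Fin (n+1)) := Fin.ext rfl
  rw [e, snoc_lt p c (i:ℕ) i.isLt h2]

lemma isValley_snoc_castSucc {n : ℕ} (p : Fin n → Bool) (c : Bool) (i : Fin n) :
    IsValley (Fin.snoc p c) (Fin.castSucc i) ↔ IsValley p i := by
  unfold IsValley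
  have h1 : ((Fin.castSucc i : Fin (n+1)) : ℕ) = (i : ℕ) := rfl
  constructor
  · rintro ⟨hge, hdown, hup⟩
    rw [h1] at hge
    refine ⟨hge, ?_, ?_⟩
    · rw [← snoc_lt p c ((i:ℕ)-1) (by omega) (by omega)]
      convert hdown using 2
      rfl
    · rw [← snoc_castSucc' p c i]; exact hup
  · rintro ⟨hge, hdown, hup⟩
    refine ⟨hge, ?_, ?_⟩
    · rw [snoc_lt p c _ (by omega : (((Fin.castSucc i : Fin (n+1)) : ℕ) - 1) < n) _]
      convert hdown using 2
      rfl
    · rw [snoc_castSucc']; exact hup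

lemma isValley_snoc_last {n : ℕ} (p : Fin n → Bool) (c : Bool) :
    IsValley (Fin.snoc p c) (Fin.last n) ↔ (lastD p ∧ c = true) := by
  unfold IsValley
  rw [lastD_iff]
  constructor
  · rintro ⟨hge, hdown, hup⟩
    simp only [Fin.val_last] at hge hdown hup
    rw [snoc_lt p c _ (by omega : n - 1 < n) _] at hdown
    refine ⟨⟨hge, hdown⟩, ?_⟩
    rw [← snoc_last' p c (by omega)]
    convert hup using 2
    rfl
  · rintro ⟨⟨hge, hdown⟩, hup⟩
    simp only [Fin.val_last]
    refine ⟨hge, ?_, ?_⟩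
    · rw [snoc_lt p c _ (by omega : n - 1 < n) _]
      exact hdown
    · rw [show (Fin.last n : Fin (n+1)) = ⟨n, by omega⟩ from rfl, snoc_last' p c]
      exact hup

lemma isReturn_snoc_castSucc {n : ℕ} (p : Fin n → Bool) (c : Bool) (i : Fin n) :
    IsReturn (Fin.snoc p c) (Fin.castSucc i) ↔ IsReturn p i := by
  unfold IsReturn
  rw [isValley_snoc_castSucc]
  have h1 : ((Fin.castSucc i : Fin (n+1)) : ℕ) = (i : ℕ) := rfl
  rw [h1, ht_snoc p c i (le_of_lt i.isLt)]

lemma isReturn_snoc_last {n : ℕ} (p : Fin n → Bool) (c : Bool) :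
    IsReturn (Fin.snoc p c) (Fin.last n) ↔ (lastD p ∧ c = true ∧ ht p n = 0) := by
  unfold IsReturn
  rw [isValley_snoc_last]
  have h1 : ((Fin.last n : Fin (n+1)) : ℕ) = n := rfl
  rw [h1, ht_snoc p c n le_rfl]
  tauto

lemma pmaj_snoc {n : ℕ} (p : Fin n → Bool) (c : Bool) :
    pmaj (Fin.snoc p c) = pmaj p + (if lastD p ∧ c = true then n else 0) := by
  unfold pmaj
  rw [Finset.sum_filter, Finset.sum_filter, Fin.sum_univ_castSucc]
  congr 1
  · apply Finset.sum_congr rfl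
    intro i _
    rw [if_congr (isValley_snoc_castSucc p c i) (Fin.coe_castSucc i) rfl]
  · rw [if_congr (isValley_snoc_last p c) rfl rfl]
    simp

/-! ### Finset side -/

noncomputable def fsU {n : ℕ} (A : Finset (Fin n)) (b : Bool) : Finset (Fin (n+1)) :=
  A.map (Fin.castSuccEmb) ∪ (if b then {Fin.last n} else ∅)

lemma mem_fsU_castSucc {n : ℕ} (A : Finset (Fin n)) (b : Bool) (i : Fin n) :
    Fin.castSucc i ∈ fsU A b ↔ i ∈ A := by
  unfold fsU
  simp only [Finset.mem_union, Finset.mem_map]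
  constructor
  · rintro (⟨j, hj, he⟩ | h)
    · have : j = i := Fin.castSucc_injective n he
      rwa [← this]
    · exfalso
      rcases b with _ | _
      · simp at h
      · simp only [if_true, Finset.mem_singleton] at h
        exact absurd (congrArg Fin.val h) (by simp; omega)
  · intro h
    exact Or.inl ⟨i, h, rfl⟩

lemma mem_fsU_last {n : ℕ} (A : Finset (Fin n)) (b : Bool) :
    Fin.last n ∈ fsU A b ↔ b = true := by
  unfold fsU
  simp only [Finset.mem_union, Finset.mem_map]
  constructor
  · rintro (⟨j, hj, he⟩ | h)
    · exact absurd (congrArg Fin.val he) (by simp; omega)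
    · rcases b with _ | _ <;> simp_all
  · intro h
    subst h
    simp

lemma fsU_disj {n : ℕ} (A : Finset (Fin n)) (b : Bool) :
    Disjoint (A.map (Fin.castSuccEmb)) (if b then ({Fin.last n} : Finset (Fin (n+1))) else ∅) := by
  rcases b with _ | _
  · simp
  · simp only [if_true, Finset.disjoint_singleton_right, Finset.mem_map]
    rintro ⟨j, hj, he⟩
    exact absurd (congrArg Fin.val he) (by simp; omega)

lemma card_fsU {n : ℕ} (A : Finset (Fin n)) (b : Bool) :
    (fsU A b).card = A.card + (if b then 1 else 0) := by
  unfold fsU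
  rw [Finset.card_union_of_disjoint (fsU_disj A b), Finset.card_map]
  rcases b with _ | _ <;> simp

lemma sum_fsU {n : ℕ} (A : Finset (Fin n)) (b : Bool) :
    (∑ i ∈ fsU A b, (i : ℕ)) = (∑ i ∈ A, (i : ℕ)) + (if b then n else 0) := by
  unfold fsU
  rw [Finset.sum_union (fsU_disj A b), Finset.sum_map]
  rcases b with _ | _ <;> simp

noncomputable def E (n : ℕ) :
    ((Fin n → Bool) × Finset (Fin n)) × Bool × Bool ≃ (Fin (n+1) → Bool) × Finset (Fin (n+1)) where
  toFun x := (Fin.snoc x.1.1 x.2.1, fsU x.1.2 x.2.2)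
  invFun y := ((y.1 ∘ Fin.castSucc, Finset.univ.filter fun i => Fin.castSucc i ∈ y.2),
               (y.1 (Fin.last n), if Fin.last n ∈ y.2 then true else false))
  left_inv := by
    rintro ⟨⟨p, A⟩, c, b⟩
    refine Prod.ext (Prod.ext ?_ ?_) (Prod.ext ?_ ?_)
    · funext i
      exact snoc_castSucc' p c i
    · ext i
      simp [mem_fsU_castSucc]
    · dsimp only
      exact Fin.snoc_last _ _
    · rcases b with _ | _ <;> simp [mem_fsU_last]
  right_inv := by
    rintro ⟨q, M⟩
    refine Prod.ext ?_ ?_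
    · funext i
      refine Fin.lastCases ?_ ?_ i
      · simp [Fin.snoc_last]
      · intro j
        simp [snoc_castSucc']
    · ext i
      refine Fin.lastCases ?_ ?_ i
      · rw [mem_fsU_last]
        dsimp only
        split_ifs with h <;> simp [h]
      · intro j
        rw [mem_fsU_castSucc]
        simp

/-! ### the sums -/

def Pc (n h r : ℕ) (x : (Fin n → Bool) × Finset (Fin n)) : Prop :=
  (∀ k, 0 ≤ ht x.1 k) ∧ ht x.1 n = (h:ℤ) ∧ (∀ i ∈ x.2, IsReturn x.1 i) ∧ r ≤ x.2.card

noncomputable def Ssum (n h r : ℕ) : PowerSeries ℚ :=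
  ∑ x ∈ Finset.univ.filter (Pc n h r), (PowerSeries.X : PowerSeries ℚ) ^ vmr x.1 x.2

noncomputable def Tsum (n h r : ℕ) : PowerSeries ℚ :=
  ∑ x ∈ Finset.univ.filter (fun x => Pc n h r x ∧ lastD x.1),
    (PowerSeries.X : PowerSeries ℚ) ^ vmr x.1 x.2

lemma sum_marks_le {n : ℕ} (p : Fin n → Bool) (A : Finset (Fin n))
    (hA : ∀ i ∈ A, IsReturn p i) : (∑ i ∈ A, (i:ℕ)) ≤ pmaj p := by
  unfold pmaj
  apply Finset.sum_le_sum_of_subset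
  intro i hi
  simp only [Finset.mem_filter, Finset.mem_univ, true_and]
  exact (hA i hi).1

lemma sum_marks_even {n : ℕ} (p : Fin n → Bool) (A : Finset (Fin n))
    (hA : ∀ i ∈ A, IsReturn p i) : 2 ∣ (∑ i ∈ A, (i:ℕ)) := by
  apply Finset.dvd_sum
  intro i hi
  have h1 := ht_even p i (le_of_lt i.isLt)
  rw [(hA i hi).2] at h1
  rcases h1 with ⟨c, hc⟩
  simp only [zero_add] at hc
  have : 0 ≤ c := by omega
  exact ⟨c.toNat, by omega⟩

lemma two_dvd_of_ht_zero {n : ℕ} (p : Fin n → Bool) (h : ht p n = 0) : 2 ∣ n := by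
  have h1 := ht_even p n le_rfl
  rw [h] at h1
  rcases h1 with ⟨c, hc⟩
  simp only [zero_add] at hc
  have : 0 ≤ c := by omega
  exact ⟨c.toNat, by omega⟩

lemma lastD_snoc {n : ℕ} (p : Fin n → Bool) (c : Bool) :
    lastD (Fin.snoc p c) ↔ c = false := by
  rw [lastD_iff]
  have e : (⟨n+1-1, by omega⟩ : Fin (n+1)) = ⟨n, by omega⟩ := Fin.ext (by simp)
  constructor
  · rintro ⟨h, hp⟩
    rwa [e, snoc_last' p c] at hp
  · intro h
    exact ⟨by omega, by rw [e, snoc_last' p c]; exact h⟩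

lemma marks_fsU {n : ℕ} (p : Fin n → Bool) (c : Bool) (A : Finset (Fin n)) (b : Bool) :
    (∀ i ∈ fsU A b, IsReturn (Fin.snoc p c) i) ↔
      ((∀ i ∈ A, IsReturn p i) ∧ (b = true → (lastD p ∧ c = true ∧ ht p n = 0))) := by
  constructor
  · intro hmk
    refine ⟨fun i hi => (isReturn_snoc_castSucc p c i).mp (hmk _ ((mem_fsU_castSucc A b i).mpr hi)),
      fun hb => (isReturn_snoc_last p c).mp (hmk _ ((mem_fsU_last A b).mpr hb))⟩
  · rintro ⟨h1, h2⟩ i hi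
    unfold fsU at hi
    rcases Finset.mem_union.mp hi with hi | hi
    · rcases Finset.mem_map.mp hi with ⟨j, hj, rfl⟩
      exact (isReturn_snoc_castSucc p c j).mpr (h1 j hj)
    · rcases b with _ | _
      · simp at hi
      · simp only [if_true, Finset.mem_singleton] at hi
        subst hi
        exact (isReturn_snoc_last p c).mpr (h2 rfl)

lemma nonneg_end_snoc {n : ℕ} (p : Fin n → Bool) (c : Bool) (h : ℕ) :
    ((∀ k, 0 ≤ ht (Fin.snoc p c) k) ∧ ht (Fin.snoc p c) (n+1) = (h:ℤ)) ↔
      ((∀ k, 0 ≤ ht p k) ∧ ht p n = (h:ℤ) - (if c then 1 else -1)) := by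
  have htop := ht_snoc_top p c
  constructor
  · rintro ⟨hnn, hend⟩
    constructor
    · intro k
      rcases le_or_gt k n with hk | hk
      · rw [← ht_snoc p c k hk]; exact hnn k
      · rw [ht_ge p k (by omega), ← ht_snoc p c n le_rfl]; exact hnn n
    · rw [hend] at htop; linarith
  · rintro ⟨hnn, hend⟩
    have hq : ht (Fin.snoc p c) (n+1) = (h:ℤ) := by rw [htop, hend]; ring
    refine ⟨?_, hq⟩
    intro k
    rcases le_or_gt k n with hk | hk
    · rw [ht_snoc p c k hk]; exact hnn k
    · rw [ht_ge _ k (by omega : n+1 ≤ k), hq]; positivity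

/-! ### Pc branch lemmas -/

lemma nonneg_end_snoc_f {n : ℕ} (p : Fin n → Bool) (h : ℕ) :
    ((∀ k, 0 ≤ ht (Fin.snoc p false) k) ∧ ht (Fin.snoc p false) (n+1) = (h:ℤ)) ↔
      ((∀ k, 0 ≤ ht p k) ∧ ht p n = ((h+1 : ℕ):ℤ)) := by
  rw [nonneg_end_snoc, if_neg (Bool.false_ne_true)]
  apply and_congr_right'
  constructor <;> intro hx <;> (push_cast at hx ⊢; linarith)

lemma nonneg_end_snoc_t {n : ℕ} (p : Fin n → Bool) (h : ℕ) :
    ((∀ k, 0 ≤ ht (Fin.snoc p true) k) ∧ ht (Fin.snoc p true) (n+1) = ((h+1 : ℕ):ℤ)) ↔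
      ((∀ k, 0 ≤ ht p k) ∧ ht p n = (h:ℤ)) := by
  rw [nonneg_end_snoc, if_pos rfl]
  apply and_congr_right'
  constructor <;> intro hx <;> (push_cast at hx ⊢; linarith)

lemma Pc_snoc_ff {n : ℕ} (p : Fin n → Bool) (A : Finset (Fin n)) (h r : ℕ) :
    Pc (n+1) h r (Fin.snoc p false, fsU A false) ↔ Pc n (h+1) r (p, A) := by
  unfold Pc
  dsimp only
  have e1 := nonneg_end_snoc_f p h
  have e2 := marks_fsU p false A false
  have e3 := card_fsU A false
  rw [if_neg (Bool.false_ne_true)] at e3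
  constructor
  · rintro ⟨h1, h2, h3, h4⟩
    obtain ⟨g1, g2⟩ := e1.mp ⟨h1, h2⟩
    exact ⟨g1, g2, (e2.mp h3).1, by omega⟩
  · rintro ⟨h1, h2, h3, h4⟩
    obtain ⟨g1, g2⟩ := e1.mpr ⟨h1, h2⟩
    exact ⟨g1, g2, e2.mpr ⟨h3, by simp⟩, by omega⟩

lemma Pc_snoc_ft {n : ℕ} (p : Fin n → Bool) (A : Finset (Fin n)) (h r : ℕ) :
    ¬ Pc (n+1) h r (Fin.snoc p false, fsU A true) := by
  rintro ⟨_, _, h3, _⟩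
  have := ((marks_fsU p false A true).mp h3).2 rfl
  simp at this

lemma Pc_snoc_tf {n : ℕ} (p : Fin n → Bool) (A : Finset (Fin n)) (h r : ℕ) :
    Pc (n+1) (h+1) r (Fin.snoc p true, fsU A false) ↔ Pc n h r (p, A) := by
  unfold Pc
  dsimp only
  have e1 := nonneg_end_snoc_t p h
  have e2 := marks_fsU p true A false
  have e3 := card_fsU A false
  rw [if_neg (Bool.false_ne_true)] at e3
  constructor
  · rintro ⟨h1, h2, h3, h4⟩
    obtain ⟨g1, g2⟩ := e1.mp ⟨h1, h2⟩
    exact ⟨g1, g2, (e2.mp h3).1, by omega⟩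
  · rintro ⟨h1, h2, h3, h4⟩
    obtain ⟨g1, g2⟩ := e1.mpr ⟨h1, h2⟩
    exact ⟨g1, g2, e2.mpr ⟨h3, by simp⟩, by omega⟩

lemma Pc_snoc_tt {n : ℕ} (p : Fin n → Bool) (A : Finset (Fin n)) (h r : ℕ) :
    Pc (n+1) (h+1) r (Fin.snoc p true, fsU A true) ↔
      (h = 0 ∧ Pc n 0 (r-1) (p, A) ∧ lastD p) := by
  unfold Pc
  dsimp only
  have e1 := nonneg_end_snoc_t p h
  have e2 := marks_fsU p true A true
  have e3 := card_fsU A true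
  rw [if_pos rfl] at e3
  constructor
  · rintro ⟨h1, h2, h3, h4⟩
    obtain ⟨g1, g2⟩ := e1.mp ⟨h1, h2⟩
    obtain ⟨m1, m2⟩ := e2.mp h3
    obtain ⟨d1, _, d3⟩ := m2 rfl
    have hh : h = 0 := by rw [d3] at g2; exact_mod_cast g2.symm
    subst hh
    exact ⟨rfl, ⟨g1, d3, m1, by omega⟩, d1⟩
  · rintro ⟨hh, ⟨h1, h2, h3, h4⟩, h5⟩
    subst hh
    obtain ⟨g1, g2⟩ := e1.mpr ⟨h1, h2⟩
    exact ⟨g1, g2, e2.mpr ⟨h3, fun _ => ⟨h5, rfl, h2⟩⟩, by omega⟩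

/-! ### weight (vmr) branch lemmas -/

lemma if_bool_f {α : Type*} (a b : α) : (if (false : Bool) = true then a else b) = b :=
  if_neg (Bool.false_ne_true)

lemma if_bool_t {α : Type*} (a b : α) : (if (true : Bool) = true then a else b) = a :=
  if_pos rfl

lemma vmr_snoc_ff {n : ℕ} (p : Fin n → Bool) (A : Finset (Fin n)) :
    vmr (Fin.snoc p false) (fsU A false) = vmr p A := by
  unfold vmr
  rw [pmaj_snoc, sum_fsU, if_bool_f, if_neg]
  · simp
  · rintro ⟨_, h⟩; exact Bool.false_ne_true h

lemma vmr_snoc_tf {n : ℕ} (p : Fin n → Bool) (A : Finset (Fin n))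
    (hA : ∀ i ∈ A, IsReturn p i) :
    vmr (Fin.snoc p true) (fsU A false) = vmr p A + (if lastD p then n else 0) := by
  unfold vmr
  rw [pmaj_snoc, sum_fsU, if_bool_f]
  have h1 := sum_marks_le p A hA
  have h2 : (∑ i ∈ A, (i:ℕ)) / 2 ≤ pmaj p := le_trans (Nat.div_le_self _ _) h1
  by_cases hd : lastD p
  · rw [if_pos ⟨hd, rfl⟩, if_pos hd]
    omega
  · rw [if_neg (by tauto), if_neg hd]
    omega

lemma vmr_snoc_tt {n : ℕ} (p : Fin n → Bool) (A : Finset (Fin n))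
    (hA : ∀ i ∈ A, IsReturn p i) (hd : lastD p) (hz : ht p n = 0) :
    vmr (Fin.snoc p true) (fsU A true) = vmr p A + n / 2 := by
  unfold vmr
  rw [pmaj_snoc, sum_fsU, if_bool_t, if_pos ⟨hd, rfl⟩]
  have h1 := sum_marks_le p A hA
  have h2 := sum_marks_even p A hA
  have h3 := two_dvd_of_ht_zero p hz
  omega

/-! ### structural recursions -/

theorem Tsum_succ (n h r : ℕ) : Tsum (n+1) h r = Ssum n (h+1) r := by
  rw [Tsum, Ssum, Finset.sum_filter, Finset.sum_filter]
  rw [← Equiv.sum_comp (E n) (fun y => if Pc (n+1) h r y ∧ lastD y.1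
      then (PowerSeries.X : PowerSeries ℚ) ^ vmr y.1 y.2 else 0)]
  rw [Fintype.sum_prod_type]
  apply Finset.sum_congr rfl
  rintro ⟨p, A⟩ -
  rw [Fintype.sum_prod_type, Fintype.sum_bool, Fintype.sum_bool, Fintype.sum_bool]
  have ha : ∀ c b, (E n) ((p,A),(c,b)) = (Fin.snoc p c, fsU A b) := fun _ _ => rfl
  rw [ha, ha, ha, ha]
  dsimp only
  rw [if_neg (fun hx => (by simp : ¬ (true = false)) ((lastD_snoc p true).mp hx.2))]
  rw [if_neg (fun hx => (by simp : ¬ (true = false)) ((lastD_snoc p true).mp hx.2))]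
  rw [if_neg (fun hx => Pc_snoc_ft p A h r hx.1)]
  rw [if_congr (Iff.intro (fun hx => (Pc_snoc_ff p A h r).mp hx.1)
        (fun hx => ⟨(Pc_snoc_ff p A h r).mpr hx, (lastD_snoc p false).mpr rfl⟩))
      (congrArg (fun m => (PowerSeries.X : PowerSeries ℚ) ^ m) (vmr_snoc_ff p A)) rfl]
  ring

theorem Ssum_succ (n h r : ℕ) :
    Ssum (n+1) (h+1) r = Ssum n (h+2) r + (Ssum n h r - Tsum n h r)
      + (PowerSeries.X : PowerSeries ℚ)^n * Tsum n h r
      + (if h = 0 then (PowerSeries.X : PowerSeries ℚ)^(n/2) * Tsum n 0 (r-1) else 0) := by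
  have key : Ssum (n+1) (h+1) r =
      (∑ z : (Fin n → Bool) × Finset (Fin n),
        if Pc n (h+2) r z then (PowerSeries.X : PowerSeries ℚ) ^ vmr z.1 z.2 else 0)
      + ((∑ z : (Fin n → Bool) × Finset (Fin n),
        if Pc n h r z ∧ ¬ lastD z.1 then (PowerSeries.X : PowerSeries ℚ) ^ vmr z.1 z.2 else 0)
      + (∑ z : (Fin n → Bool) × Finset (Fin n),
        if Pc n h r z ∧ lastD z.1 then (PowerSeries.X : PowerSeries ℚ)^n * (PowerSeries.X : PowerSeries ℚ) ^ vmr z.1 z.2 else 0)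
      + (∑ z : (Fin n → Bool) × Finset (Fin n),
        if h = 0 ∧ (Pc n 0 (r-1) z ∧ lastD z.1) then (PowerSeries.X : PowerSeries ℚ)^(n/2) * (PowerSeries.X : PowerSeries ℚ) ^ vmr z.1 z.2 else 0)) := by
    rw [Ssum, Finset.sum_filter]
    rw [← Equiv.sum_comp (E n) (fun y => if Pc (n+1) (h+1) r y
        then (PowerSeries.X : PowerSeries ℚ) ^ vmr y.1 y.2 else 0)]
    rw [Fintype.sum_prod_type]
    rw [← Finset.sum_add_distrib, ← Finset.sum_add_distrib, ← Finset.sum_add_distrib]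
    apply Finset.sum_congr rfl
    rintro ⟨p, A⟩ -
    rw [Fintype.sum_prod_type, Fintype.sum_bool, Fintype.sum_bool, Fintype.sum_bool]
    have ha : ∀ c b, (E n) ((p,A),(c,b)) = (Fin.snoc p c, fsU A b) := fun _ _ => rfl
    rw [ha, ha, ha, ha]
    dsimp only
    -- (true, true) term
    have t_tt : (if Pc (n+1) (h+1) r (Fin.snoc p true, fsU A true)
        then (PowerSeries.X : PowerSeries ℚ) ^ vmr (Fin.snoc p true) (fsU A true) else 0)
        = (if h = 0 ∧ (Pc n 0 (r-1) (p, A) ∧ lastD p)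
          then (PowerSeries.X : PowerSeries ℚ)^(n/2) * (PowerSeries.X : PowerSeries ℚ) ^ vmr p A else 0) := by
      by_cases hc : h = 0 ∧ (Pc n 0 (r-1) (p, A) ∧ lastD p)
      · obtain ⟨h0, hq, hd⟩ := hc
        have hz : ht p n = 0 := by have := hq.2.1; exact_mod_cast this
        rw [if_pos ((Pc_snoc_tt p A h r).mpr ⟨h0, hq, hd⟩), if_pos ⟨h0, hq, hd⟩,
          vmr_snoc_tt p A hq.2.2.1 hd hz, pow_add]
        ring
      · rw [if_neg (fun hx => hc ((Pc_snoc_tt p A h r).mp hx)), if_neg hc]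
    -- (true, false) term
    have t_tf : (if Pc (n+1) (h+1) r (Fin.snoc p true, fsU A false)
        then (PowerSeries.X : PowerSeries ℚ) ^ vmr (Fin.snoc p true) (fsU A false) else 0)
        = (if Pc n h r (p, A) ∧ ¬ lastD p then (PowerSeries.X : PowerSeries ℚ) ^ vmr p A else 0)
          + (if Pc n h r (p, A) ∧ lastD p
            then (PowerSeries.X : PowerSeries ℚ)^n * (PowerSeries.X : PowerSeries ℚ) ^ vmr p A else 0) := by
      by_cases hp : Pc n h r (p, A)
      · rw [if_pos ((Pc_snoc_tf p A h r).mpr hp), vmr_snoc_tf p A hp.2.2.1]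
        by_cases hd : lastD p
        · rw [if_pos hd, if_neg (fun hx => hx.2 hd), if_pos ⟨hp, hd⟩, pow_add]
          ring
        · rw [if_neg hd, if_pos ⟨hp, hd⟩, if_neg (fun hx => hd hx.2)]
          simp
      · rw [if_neg (fun hx => hp ((Pc_snoc_tf p A h r).mp hx)),
          if_neg (fun hx => hp hx.1), if_neg (fun hx => hp hx.1)]
        simp
    -- (false, true) term
    have t_ft : (if Pc (n+1) (h+1) r (Fin.snoc p false, fsU A true)
        then (PowerSeries.X : PowerSeries ℚ) ^ vmr (Fin.snoc p false) (fsU A true) else 0) = 0 := by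
      rw [if_neg (Pc_snoc_ft p A (h+1) r)]
    -- (false, false) term
    have t_ff : (if Pc (n+1) (h+1) r (Fin.snoc p false, fsU A false)
        then (PowerSeries.X : PowerSeries ℚ) ^ vmr (Fin.snoc p false) (fsU A false) else 0)
        = (if Pc n (h+2) r (p, A) then (PowerSeries.X : PowerSeries ℚ) ^ vmr p A else 0) := by
      rw [if_congr (Pc_snoc_ff p A (h+1) r)
        (congrArg (fun m => (PowerSeries.X : PowerSeries ℚ) ^ m) (vmr_snoc_ff p A)) rfl]
    rw [t_tt, t_tf, t_ft, t_ff]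
    ring
  have e2 : (∑ z : (Fin n → Bool) × Finset (Fin n),
      if Pc n h r z ∧ ¬ lastD z.1 then (PowerSeries.X : PowerSeries ℚ) ^ vmr z.1 z.2 else 0)
      = Ssum n h r - Tsum n h r := by
    have hs : Ssum n h r = Tsum n h r
        + ∑ z : (Fin n → Bool) × Finset (Fin n),
          (if Pc n h r z ∧ ¬ lastD z.1 then (PowerSeries.X : PowerSeries ℚ) ^ vmr z.1 z.2 else 0) := by
      rw [Ssum, Tsum, Finset.sum_filter, Finset.sum_filter, ← Finset.sum_add_distrib]
      apply Finset.sum_congr rfl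
      intro z _
      by_cases hp : Pc n h r z
      · by_cases hd : lastD z.1
        · rw [if_pos hp, if_pos ⟨hp, hd⟩, if_neg (fun hx => hx.2 hd), add_zero]
        · rw [if_pos hp, if_neg (fun hx => hd hx.2), if_pos ⟨hp, hd⟩, zero_add]
      · rw [if_neg hp, if_neg (fun hx => hp hx.1), if_neg (fun hx => hp hx.1), add_zero]
    rw [hs]; ring
  have e3 : (∑ z : (Fin n → Bool) × Finset (Fin n),
      if Pc n h r z ∧ lastD z.1 then (PowerSeries.X : PowerSeries ℚ)^n * (PowerSeries.X : PowerSeries ℚ) ^ vmr z.1 z.2 else 0)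
      = (PowerSeries.X : PowerSeries ℚ)^n * Tsum n h r := by
    rw [Tsum, Finset.sum_filter, Finset.mul_sum]
    apply Finset.sum_congr rfl
    intro z _
    by_cases hp : Pc n h r z ∧ lastD z.1
    · rw [if_pos hp, if_pos hp]
    · rw [if_neg hp, if_neg hp, mul_zero]
  have e4 : (∑ z : (Fin n → Bool) × Finset (Fin n),
      if h = 0 ∧ (Pc n 0 (r-1) z ∧ lastD z.1) then (PowerSeries.X : PowerSeries ℚ)^(n/2) * (PowerSeries.X : PowerSeries ℚ) ^ vmr z.1 z.2 else 0)
      = (if h = 0 then (PowerSeries.X : PowerSeries ℚ)^(n/2) * Tsum n 0 (r-1) else 0) := by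
    by_cases h0 : h = 0
    · subst h0
      rw [if_pos rfl, Tsum, Finset.sum_filter, Finset.mul_sum]
      apply Finset.sum_congr rfl
      intro z _
      by_cases hp : Pc n 0 (r-1) z ∧ lastD z.1
      · rw [if_pos ⟨rfl, hp⟩, if_pos hp]
      · rw [if_neg (fun hx => hp hx.2), if_neg hp, mul_zero]
    · rw [if_neg h0]
      apply Finset.sum_eq_zero
      intro z _
      rw [if_neg (fun hx => h0 hx.1)]
  have e1 : (∑ z : (Fin n → Bool) × Finset (Fin n),
      if Pc n (h+2) r z then (PowerSeries.X : PowerSeries ℚ) ^ vmr z.1 z.2 else 0)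
      = Ssum n (h+2) r := by
    rw [Ssum, Finset.sum_filter]
  rw [key, e1, e2, e3, e4]
  ring

/-! ### base cases -/

lemma Tsum_zero (h r : ℕ) : Tsum 0 h r = 0 := by
  rw [Tsum]
  apply Finset.sum_eq_zero
  intro z hz
  simp only [Finset.mem_filter] at hz
  obtain ⟨i, _, _⟩ := hz.2.2
  exact i.elim0

lemma Ssum_zero (h r : ℕ) : Ssum 0 h r = if h = 0 ∧ r = 0 then 1 else 0 := by
  haveI : Subsingleton ((Fin 0 → Bool) × Finset (Fin 0)) := by
    constructor
    rintro ⟨p1, A1⟩ ⟨p2, A2⟩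
    have hp : p1 = p2 := funext (fun i => i.elim0)
    have hA : A1 = A2 := by ext i; exact i.elim0
    rw [hp, hA]
  have hht0 : ∀ (p : Fin 0 → Bool) (k : ℕ), ht p k = 0 := by
    intro p k
    rw [ht]
    apply Finset.sum_eq_zero
    intro i _
    exact i.elim0
  rw [Ssum, Finset.sum_filter, Fintype.sum_subsingleton _ ((fun i => i.elim0), (∅ : Finset (Fin 0)))]
  have hpm : pmaj (fun i : Fin 0 => i.elim0) = 0 := by
    rw [pmaj]
    apply Finset.sum_eq_zero
    intro i _
    exact i.elim0
  by_cases hc : h = 0 ∧ r = 0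
  · rw [if_pos hc, if_pos]
    · rw [vmr, hpm]
      simp
    · refine ⟨fun k => le_of_eq (hht0 _ k).symm, ?_, fun i hi => i.elim0, ?_⟩
      · rw [hht0, hc.1]; simp
      · simp [hc.2]
  · rw [if_neg hc, if_neg]
    rintro ⟨h1, h2, h3, h4⟩
    rw [hht0] at h2
    simp only [Finset.card_empty] at h4
    exact hc ⟨by exact_mod_cast h2.symm, by omega⟩

lemma S0T (n r : ℕ) (hn : 1 ≤ n) : Ssum n 0 r = Tsum n 0 r := by
  rw [Ssum, Tsum]
  apply Finset.sum_congr _ (fun _ _ => rfl)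
  ext z
  simp only [Finset.mem_filter, Finset.mem_univ, true_and]
  constructor
  · intro hp
    refine ⟨hp, ?_⟩
    by_contra hd
    have hlast : z.1 ⟨n-1, by omega⟩ = true := by
      rcases hv : z.1 ⟨n-1, by omega⟩ with _ | _
      · exact absurd ((lastD_iff z.1).mpr ⟨hn, hv⟩) hd
      · rfl
    have hstep := ht_succ z.1 (n-1) (by omega)
    rw [hlast] at hstep
    simp only [if_true] at hstep
    have hnn := hp.1 (n-1)
    have hend := hp.2.1
    rw [show (n-1)+1 = n from by omega] at hstep
    rw [hend] at hstep
    push_cast at hstep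
    linarith
  · tauto

/-! ### the closed form -/

noncomputable def Fq (n h r : ℕ) : PowerSeries ℚ :=
  if h ≤ n ∧ 2 ∣ (n - h) ∧ r ≤ (n - h)/2
  then (PowerSeries.X : PowerSeries ℚ)^((r+1).choose 2) * qbin n ((n-h)/2 - r) else 0

lemma choose2_succ (r : ℕ) : (r+1).choose 2 = r.choose 2 + r := by
  rw [Nat.choose_two_right, Nat.choose_two_right]
  have h2 : 2 ∣ r * (r - 1) := (Nat.even_mul_pred_self r).two_dvd
  have h3 : (r+1) * (r+1-1) = r * (r-1) + 2 * r := by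
    cases r with
    | zero => rfl
    | succ m => simp only [Nat.add_sub_cancel]; ring_nf
  omega

lemma Falg2 (m g r : ℕ) :
    Fq (m+2) (g+2) r = Fq (m+1) (g+3) r + Fq (m+1) (g+1) r
      + ((PowerSeries.X : PowerSeries ℚ)^(m+1) - 1) * Fq m (g+2) r := by
  unfold Fq
  by_cases c1 : g ≤ m
  · by_cases c2 : 2 ∣ (m - g)
    · obtain ⟨a, ha⟩ := c2
      by_cases c3 : r ≤ a
      · by_cases c4 : r + 1 ≤ a
        · rw [if_pos ⟨by omega, by omega, by omega⟩, if_pos ⟨by omega, by omega, by omega⟩,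
            if_pos ⟨by omega, by omega, by omega⟩, if_pos ⟨by omega, by omega, by omega⟩]
          rw [show (m+2-(g+2))/2 - r = a - r from by omega,
            show (m+1-(g+3))/2 - r = a-r-1 from by omega,
            show (m+1-(g+1))/2 - r = a - r from by omega,
            show (m-(g+2))/2 - r = a-r-1 from by omega]
          have hI := I1 (a-r-1) (m+1-(a-r))
          rw [show a-r-1 + (m+1-(a-r)) + 2 = m+2 from by omega,
            show a-r-1+1 = a-r from by omega,
            show a-r-1 + (m+1-(a-r)) + 1 = m+1 from by omega,
            show a-r-1 + (m+1-(a-r)) = m from by omega] at hI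
          rw [hI]
          ring
        · -- r = a
          rw [if_pos ⟨by omega, by omega, by omega⟩,
            if_neg (fun hx => by obtain ⟨u, v, w⟩ := hx; omega),
            if_pos ⟨by omega, by omega, by omega⟩,
            if_neg (fun hx => by obtain ⟨u, v, w⟩ := hx; omega)]
          rw [show (m+2-(g+2))/2 - r = 0 from by omega,
            show (m+1-(g+1))/2 - r = 0 from by omega, qbin_zero, qbin_zero]
          ring
      · rw [if_neg (fun hx => by obtain ⟨u, v, w⟩ := hx; omega),
          if_neg (fun hx => by obtain ⟨u, v, w⟩ := hx; omega),
          if_neg (fun hx => by obtain ⟨u, v, w⟩ := hx; omega),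
          if_neg (fun hx => by obtain ⟨u, v, w⟩ := hx; omega)]
        ring
    · rw [if_neg (fun hx => by obtain ⟨u, v, w⟩ := hx; omega),
        if_neg (fun hx => by obtain ⟨u, v, w⟩ := hx; omega),
        if_neg (fun hx => by obtain ⟨u, v, w⟩ := hx; omega),
        if_neg (fun hx => by obtain ⟨u, v, w⟩ := hx; omega)]
      ring
  · rw [if_neg (fun hx => by obtain ⟨u, v, w⟩ := hx; omega),
      if_neg (fun hx => by obtain ⟨u, v, w⟩ := hx; omega),
      if_neg (fun hx => by obtain ⟨u, v, w⟩ := hx; omega),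
      if_neg (fun hx => by obtain ⟨u, v, w⟩ := hx; omega)]
    ring

lemma Falg1 (m r : ℕ) :
    Fq (m+2) 1 r = Fq (m+1) 2 r + (PowerSeries.X : PowerSeries ℚ)^(m+1) * Fq m 1 r
      + (PowerSeries.X : PowerSeries ℚ)^((m+1)/2) * Fq m 1 (r-1) := by
  unfold Fq
  by_cases c2 : 2 ∣ (m + 1)
  · obtain ⟨a, ha⟩ := c2
    have ha1 : 1 ≤ a := by omega
    by_cases c3 : r ≤ a
    · rcases Nat.eq_zero_or_pos r with rfl | hr
      · -- r = 0
        rw [if_pos ⟨by omega, by omega, by omega⟩, if_pos ⟨by omega, by omega, by omega⟩,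
          if_pos ⟨by omega, by omega, by omega⟩]
        rw [show (m+2-1)/2 - 0 = a from by omega,
          show (m+1-2)/2 - 0 = a-1 from by omega,
          show (m-1)/2 - 0 = a-1 from by omega,
          show (m+1)/2 = a from by omega]
        have hI := I3 (a-1)
        rw [show 2*(a-1)+3 = m+2 from by omega, show (a-1)+1 = a from by omega,
          show 2*(a-1)+2 = m+1 from by omega, show 2*(a-1)+1 = m from by omega] at hI
        rw [hI, show (m+1 : ℕ) = 2*(a-1)+2 from by omega]
        rw [show 2*(a-1)+2 = m+1 from by omega]
        ring
      · by_cases c4 : r ≤ a - 1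
        · -- main case, r ≥ 1, k ≥ 1
          rw [if_pos ⟨by omega, by omega, by omega⟩, if_pos ⟨by omega, by omega, by omega⟩,
            if_pos ⟨by omega, by omega, by omega⟩, if_pos ⟨by omega, by omega, by omega⟩]
          rw [show (m+2-1)/2 - r = a-r from by omega,
            show (m+1-2)/2 - r = a-r-1 from by omega,
            show (m-1)/2 - r = a-r-1 from by omega,
            show (m-1)/2 - (r-1) = a-r from by omega,
            show (m+1)/2 = a from by omega,
            show r-1+1 = r from by omega]
          have hI := I2 (a-r-1) (a+r-1)
          rw [show a-r-1 + (a+r-1) + 3 = m+2 from by omega,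
            show a-r-1+1 = a-r from by omega,
            show a-r-1 + (a+r-1) + 2 = m+1 from by omega,
            show a-r-1 + (a+r-1) + 1 = m from by omega] at hI
          have e : (PowerSeries.X : PowerSeries ℚ)^a * (PowerSeries.X : PowerSeries ℚ)^(r.choose 2)
              = (PowerSeries.X : PowerSeries ℚ)^((r+1).choose 2) * (PowerSeries.X : PowerSeries ℚ)^(a-r) := by
            rw [← pow_add, ← pow_add]
            congr 1
            have := choose2_succ r
            omega
          linear_combination (PowerSeries.X : PowerSeries ℚ)^((r+1).choose 2) * hI - qbin m (a-r) * e
        · -- r = a ≥ 1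
          rw [if_pos ⟨by omega, by omega, by omega⟩,
            if_neg (fun hx => by obtain ⟨u, v, w⟩ := hx; omega),
            if_neg (fun hx => by obtain ⟨u, v, w⟩ := hx; omega),
            if_pos ⟨by omega, by omega, by omega⟩]
          rw [show (m+2-1)/2 - r = 0 from by omega,
            show (m-1)/2 - (r-1) = 0 from by omega, qbin_zero, qbin_zero,
            show (m+1)/2 = a from by omega,
            show r-1+1 = r from by omega]
          have e : (PowerSeries.X : PowerSeries ℚ)^a * (PowerSeries.X : PowerSeries ℚ)^(r.choose 2)
              = (PowerSeries.X : PowerSeries ℚ)^((r+1).choose 2) := by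
            rw [← pow_add]
            congr 1
            have := choose2_succ r
            omega
          linear_combination -e
    · rw [if_neg (fun hx => by obtain ⟨u, v, w⟩ := hx; omega),
        if_neg (fun hx => by obtain ⟨u, v, w⟩ := hx; omega),
        if_neg (fun hx => by obtain ⟨u, v, w⟩ := hx; omega),
        if_neg (fun hx => by obtain ⟨u, v, w⟩ := hx; omega)]
      ring
  · rw [if_neg (fun hx => by obtain ⟨u, v, w⟩ := hx; omega),
      if_neg (fun hx => by obtain ⟨u, v, w⟩ := hx; omega),
      if_neg (fun hx => by obtain ⟨u, v, w⟩ := hx; omega),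
      if_neg (fun hx => by obtain ⟨u, v, w⟩ := hx; omega)]
    ring

theorem main (n : ℕ) : ∀ h r : ℕ, Ssum n (h+1) r = Fq n (h+1) r := by
  induction n using Nat.strong_induction_on with
  | _ n IH =>
  intro h r
  rcases n with _ | n
  · rw [Ssum_zero]
    rw [if_neg (by rintro ⟨hx, -⟩; omega)]
    unfold Fq
    rw [if_neg (fun hx => by obtain ⟨u, v, w⟩ := hx; omega)]
  rcases n with _ | m
  · -- n = 1
    rw [Ssum_succ 0 h r]
    simp only [Tsum_zero, Ssum_zero, mul_zero, add_zero, sub_zero, ite_self]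
    rw [if_neg (by rintro ⟨hx, -⟩; omega), show (0:ℕ)+1 = 1 from by omega]
    unfold Fq
    by_cases hc : h = 0 ∧ r = 0
    · obtain ⟨rfl, rfl⟩ := hc
      rw [if_pos ⟨rfl, rfl⟩, if_pos ⟨by omega, by omega, by omega⟩]
      rw [show (1-(0+1))/2 - 0 = 0 from by omega, qbin_zero]
      norm_num [Nat.choose]
    · rw [if_neg hc, if_neg (fun hx => by obtain ⟨u, v, w⟩ := hx; exact hc ⟨by omega, by omega⟩)]
      simp
  · -- n = m + 2
    have IH1 : Ssum (m+1) (h+1+1) r = Fq (m+1) (h+1+1) r := IH (m+1) (by omega) (h+1) r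
    have IH2 : Ssum m (h+1) r = Fq m (h+1) r := IH m (by omega) h r
    have IH3 : Ssum m (0+1) (r-1) = Fq m (0+1) (r-1) := IH m (by omega) 0 (r-1)
    rw [Ssum_succ (m+1) h r, Tsum_succ m h r, IH1, IH2]
    rcases h with _ | g
    · have IH4 : Ssum m (0+1) r = Fq m (0+1) r := IH m (by omega) 0 r
      rw [if_pos rfl, S0T (m+1) r (by omega), Tsum_succ m 0 r, Tsum_succ m 0 (r-1), IH4, IH3]
      rw [show m+1+1 = m+2 from by omega, show (0:ℕ)+1+1 = 2 from by omega,
        show (0:ℕ)+1 = 1 from by omega]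
      rw [Falg1 m r]
      ring
    · have IH5 : Ssum (m+1) (g+1) r = Fq (m+1) (g+1) r := IH (m+1) (by omega) g r
      rw [IH5, if_neg (by omega : ¬(g+1 = 0))]
      rw [show m+1+1 = m+2 from by omega, show g+1+1 = g+2 from by omega,
        show g+1+1+1 = g+3 from by omega]
      rw [Falg2 m g r]
      ring

lemma ht_total {L : ℕ} (p : Fin L → Bool) :
    ht p L = ((Finset.univ.filter fun i => p i = true).card : ℤ)
      - ((Finset.univ.filter fun i => p i = false).card : ℤ) := by
  rw [ht, Finset.filter_true_of_mem (fun i _ => i.isLt),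
    ← Finset.sum_filter_add_sum_filter_not Finset.univ (fun i => p i = true)]
  have h1 : ∑ i ∈ Finset.univ.filter (fun i => p i = true), (if p i then (1:ℤ) else -1)
      = ((Finset.univ.filter fun i => p i = true).card : ℤ) := by
    rw [Finset.sum_congr rfl (fun i hi => if_pos (Finset.mem_filter.mp hi).2)]
    simp
  have h2 : ∑ i ∈ Finset.univ.filter (fun i => ¬(p i = true)), (if p i then (1:ℤ) else -1)
      = -((Finset.univ.filter fun i => p i = false).card : ℤ) := by
    have e : Finset.univ.filter (fun i : Fin L => ¬(p i = true))
        = Finset.univ.filter (fun i => p i = false) := by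
      apply Finset.filter_congr
      intro i _
      simp
    rw [e, Finset.sum_congr rfl (fun i hi => if_neg (by
      have := (Finset.mem_filter.mp hi).2
      simp [this]))]
    simp
  rw [h1, h2]
  ring

lemma card_TF {L : ℕ} (p : Fin L → Bool) :
    (Finset.univ.filter fun i => p i = true).card
      + (Finset.univ.filter fun i => p i = false).card = L := by
  have e : Finset.univ.filter (fun i : Fin L => ¬(p i = true))
      = Finset.univ.filter (fun i => p i = false) := by
    apply Finset.filter_congr
    intro i _
    simp
  rw [← e, Finset.card_filter_add_card_filter_not]
  simp

lemma ballot_iff (s : ℕ) (p : Fin (s+s) → Bool) :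
    IsBallot p s s ↔ ((∀ k, 0 ≤ ht p k) ∧ ht p (s+s) = ((0:ℕ):ℤ)) := by
  have h1 := ht_total p
  have h2 := card_TF p
  unfold IsBallot
  constructor
  · rintro ⟨a, b, c⟩
    refine ⟨c, ?_⟩
    rw [h1, a, b]
    push_cast
    ring
  · rintro ⟨c, e⟩
    rw [e] at h1
    refine ⟨by omega, by omega, c⟩

lemma Fq_final (s r : ℕ) (hs : 1 ≤ s) :
    Fq (s+s-1) (0+1) r = PowerSeries.X ^ ((r + 1).choose 2) * qbin (2 * s - 1) (s + r) := by
  unfold Fq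
  by_cases hr : r ≤ s - 1
  · rw [if_pos ⟨by omega, by omega, by omega⟩,
      show (s+s-1-(0+1))/2 - r = s-1-r from by omega]
    congr 1
    rw [show s+s-1 = 2*s-1 from by omega, qbin_symm (2*s-1) (s-1-r) (by omega),
      show 2*s-1-(s-1-r) = s+r from by omega]
  · rw [if_neg (fun hx => by obtain ⟨u, v, w⟩ := hx; omega)]
    rw [qbin, if_neg (by omega)]
    ring

/-- The sum of `q^{vmr(D)}` over all Dyck paths `D` from `(0,0)` to `(2s,0)`
with at least `r` marked returns equals `q^{C(r+1,2)} qbinom(2s-1, s+r)`. -/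
theorem stmt_3 (s r : ℕ) (hs : 1 ≤ s) :
    ∑ x ∈ (Finset.univ : Finset ((Fin (s + s) → Bool) × Finset (Fin (s + s)))).filter
        (fun x => IsBallot x.1 s s ∧
          (∀ i ∈ x.2, IsReturn x.1 i) ∧ r ≤ x.2.card),
      (PowerSeries.X : PowerSeries ℚ) ^ vmr x.1 x.2
      = PowerSeries.X ^ ((r + 1).choose 2) * qbin (2 * s - 1) (s + r) := by
  have e0 : (Finset.univ : Finset ((Fin (s + s) → Bool) × Finset (Fin (s + s)))).filter
        (fun x => IsBallot x.1 s s ∧ (∀ i ∈ x.2, IsReturn x.1 i) ∧ r ≤ x.2.card)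
      = Finset.univ.filter (Pc (s+s) 0 r) := by
    apply Finset.filter_congr
    intro x _
    unfold Pc
    rw [ballot_iff]
    tauto
  rw [e0, ← Ssum]
  have h1 : Ssum (s+s) 0 r = Tsum (s+s) 0 r := S0T _ _ (by omega)
  have h2 : Tsum (s+s) 0 r = Ssum (s+s-1) (0+1) r := by
    rw [show s+s = (s+s-1)+1 from by omega]
    exact Tsum_succ (s+s-1) 0 r
  rw [h1, h2, main (s+s-1) 0 r, Fq_final s r hs]
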